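/- There exist r ∈ (0, r₀] and a constant C > 0 such that for all I ∈ (0, r): sup_{θ∈ℝ} ( ‖ψ(I,θ)‖ + ‖∂_θψ(I,θ)‖ ) ≤ C√I and sup_{θ∈ℝ} ‖∂_Iψ(I,θ)‖ ≤ C/√I. -/

import Mathlib

open MeasureTheory Filter Topology

open Set



lemma aux_posdef (A : (ℝ×ℝ) →L[ℝ] ((ℝ×ℝ) →L[ℝ] ℝ))
    (h : ∀ u : ℝ×ℝ, u ≠ 0 → 0 < A u u) :
    ∃ lam > 0, ∀ u : ℝ×ℝ, lam * ‖u‖^2 ≤ A u u := by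
  have hcont : Continuous fun u : ℝ×ℝ => A u u := A.continuous.clm_apply continuous_id
  have hne : (Metric.sphere (0:ℝ×ℝ) 1).Nonempty := by
    refine ⟨((1:ℝ),(0:ℝ)), ?_⟩
    simp [Prod.norm_def]
  obtain ⟨v, hv, hmin⟩ := (isCompact_sphere (0:ℝ×ℝ) 1).exists_isMinOn hne hcont.continuousOn
  have hv1 : ‖v‖ = 1 := mem_sphere_zero_iff_norm.mp hv
  have hv0 : v ≠ 0 := by intro h0; rw [h0] at hv1; simp at hv1
  refine ⟨A v v, h v hv0, fun u => ?_⟩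
  rcases eq_or_ne u 0 with rfl | hu
  · simp
  · have hnu : 0 < ‖u‖ := norm_pos_iff.mpr hu
    have hmem : (‖u‖⁻¹ • u) ∈ Metric.sphere (0:ℝ×ℝ) 1 := by
      simp [norm_smul, abs_of_pos (inv_pos.mpr hnu), inv_mul_cancel₀ hnu.ne']
    have hle := hmin hmem
    have hsc : A (‖u‖⁻¹ • u) (‖u‖⁻¹ • u) = ‖u‖⁻¹ * (‖u‖⁻¹ * A u u) := by
      rw [A.map_smul]
      simp [smul_eq_mul]
    have hle' : A v v ≤ ‖u‖⁻¹ * (‖u‖⁻¹ * A u u) := by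
      have := hle
      simp only [Set.mem_setOf_eq] at this
      rw [← hsc]
      exact this
    have := mul_le_mul_of_nonneg_left hle' (sq_nonneg ‖u‖)
    calc A v v * ‖u‖^2 = ‖u‖^2 * (A v v) := by ring
      _ ≤ ‖u‖^2 * (‖u‖⁻¹ * (‖u‖⁻¹ * A u u)) := this
      _ = A u u := by field_simp

lemma aux_quot (u' u w w' w₀ B₁ B₂ : ℝ) (h0 : 0 < w₀) (hw : w₀ ≤ w)
    (h1 : |u'| ≤ B₁) (h2 : |u| * |w'| ≤ B₂) :
    |(u' * w - u * w') / w^2| ≤ B₁/w₀ + B₂/w₀^2 := by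
  have hwpos : 0 < w := lt_of_lt_of_le h0 hw
  have hB₁ : 0 ≤ B₁ := le_trans (abs_nonneg _) h1
  have hB₂ : 0 ≤ B₂ := le_trans (by positivity) h2
  have hnum : |u' * w - u * w'| ≤ |u'| * w + |u| * |w'| := by
    calc |u' * w - u * w'| ≤ |u' * w| + |u * w'| := abs_sub _ _
      _ = |u'| * w + |u| * |w'| := by rw [abs_mul, abs_mul, abs_of_pos hwpos]
  rw [abs_div, abs_of_pos (pow_pos hwpos 2)]
  have hstep : (|u'| * w + |u| * |w'|) / w^2 ≤ B₁/w₀ + B₂/w₀^2 := by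
    rw [add_div]
    have e1 : |u'| * w / w^2 = |u'| / w := by
      rw [pow_two, mul_div_mul_right _ _ hwpos.ne']
    have e2 : |u'| / w ≤ B₁ / w₀ := div_le_div₀ hB₁ h1 h0 hw
    have e3 : |u| * |w'| / w^2 ≤ B₂ / w₀^2 :=
      div_le_div₀ hB₂ h2 (pow_pos h0 2) (pow_le_pow_left₀ h0.le hw 2)
    rw [e1]
    exact add_le_add e2 e3
  calc |u' * w - u * w'| / w^2 ≤ (|u'| * w + |u| * |w'|) / w^2 :=
        (div_le_div_iff_of_pos_right (pow_pos hwpos 2)).mpr hnum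
    _ ≤ B₁/w₀ + B₂/w₀^2 := hstep


lemma aux_quadratic (H : ℝ×ℝ → ℝ) (hHC2 : ContDiff ℝ 2 H) (hH0 : H (0,0) = 0)
    (hgrad0 : fderiv ℝ H (0,0) = 0) (lam : ℝ) (hlam : 0 < lam)
    (hlamA : ∀ u : ℝ×ℝ, lam * ‖u‖^2 ≤ fderiv ℝ (fderiv ℝ H) (0,0) u u) :
    ∃ ρ > 0, ∃ b > 0, ∃ M > 0, (∀ u : ℝ×ℝ, ‖u‖ < ρ →
      ‖fderiv ℝ H u‖ ≤ b * ‖u‖ ∧ lam/2 * ‖u‖^2 ≤ fderiv ℝ H u u ∧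
      lam/4 * ‖u‖^2 ≤ H u ∧ H u ≤ b * ‖u‖^2) ∧
      (∀ u : ℝ×ℝ, ‖u‖ ≤ ρ → ‖fderiv ℝ (fderiv ℝ H) u‖ ≤ M) := by
  set g := fderiv ℝ H with hgdef
  have hHdiff : Differentiable ℝ H := hHC2.differentiable (by norm_num)
  have hgC1 : ContDiff ℝ 1 g := hHC2.fderiv_right (by norm_num)
  have hgdiff : Differentiable ℝ g := hgC1.differentiable (by norm_num)
  set A := fderiv ℝ g (0,0) with hAdef
  have hA0 : HasFDerivAt g A (0,0) := (hgdiff (0,0)).hasFDerivAt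
  have hMcont : Continuous (fderiv ℝ g) := hgC1.continuous_fderiv (by norm_num)
  clear_value A
  clear hAdef
  -- little-o estimate
  have hlo : ∀ᶠ u in 𝓝 (0:ℝ×ℝ), ‖g u - A u‖ ≤ lam/4 * ‖u‖ := by
    have h1 := (hasFDerivAt_iff_isLittleO_nhds_zero.mp hA0)
    have h2 := (Asymptotics.isLittleO_iff.mp h1) (show (0:ℝ) < lam/4 by positivity)
    filter_upwards [h2] with u hu
    rw [show g ((0,0) + u) = g u by congr 1; ext <;> simp, show g (0,0) = 0 from hgrad0] at hu
    simpa using hu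
  obtain ⟨ρ₁, hρ₁pos, hρ₁⟩ := Metric.eventually_nhds_iff.mp hlo
  have hρ₁' : ∀ u : ℝ×ℝ, ‖u‖ < ρ₁ → ‖g u - A u‖ ≤ lam/4 * ‖u‖ := by
    intro u hu
    exact hρ₁ (by rwa [dist_zero_right])
  -- bound on the second derivative on the closed ball
  obtain ⟨M₀, hM₀⟩ := (isCompact_closedBall (0:ℝ×ℝ) ρ₁).exists_bound_of_continuousOn
    (f := fderiv ℝ g) hMcont.continuousOn
  have hAub : ∀ u : ℝ×ℝ, A u u ≤ ‖A‖ * ‖u‖^2 := by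
    intro u
    calc A u u ≤ |A u u| := le_abs_self _
      _ ≤ ‖A u‖ * ‖u‖ := by
          rw [← Real.norm_eq_abs]; exact (A u).le_opNorm u
      _ ≤ ‖A‖ * ‖u‖ * ‖u‖ := mul_le_mul_of_nonneg_right (A.le_opNorm u) (norm_nonneg u)
      _ = ‖A‖ * ‖u‖^2 := by ring
  -- the key Taylor estimate
  have hTaylor : ∀ u : ℝ×ℝ, ‖u‖ < ρ₁ → |H u - A u u / 2| ≤ lam/4 * ‖u‖^2 := by
    intro u hu
    have hd : ∀ s ∈ Icc (0:ℝ) 1,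
        HasDerivAt (fun s : ℝ => H (s • u) - s^2/2 * (A u u)) (g (s • u) u - s * A u u) s := by
      intro s _
      have h1 : HasDerivAt (fun s : ℝ => H (s • u)) (g (s • u) u) s := by
        have := (hHdiff (s • u)).hasFDerivAt.comp_hasDerivAt s
          ((hasDerivAt_id s).smul_const u)
        simpa [Function.comp_def] using this
      have h2 : HasDerivAt (fun s : ℝ => s^2/2 * (A u u)) (s * A u u) s := by
        have := ((hasDerivAt_pow 2 s).div_const 2).mul_const (A u u)
        simpa using this
      exact h1.sub h2
    have hbound : ∀ s ∈ Ico (0:ℝ) 1, ‖g (s • u) u - s * A u u‖ ≤ lam/4 * ‖u‖^2 := by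
      intro s hs
      have hsu : ‖s • u‖ < ρ₁ := by
        rw [norm_smul, Real.norm_eq_abs, abs_of_nonneg hs.1]
        calc s * ‖u‖ ≤ 1 * ‖u‖ := mul_le_mul_of_nonneg_right hs.2.le (norm_nonneg u)
          _ = ‖u‖ := one_mul _
          _ < ρ₁ := hu
      have heq : g (s • u) u - s * A u u = (g (s • u) - A (s • u)) u := by
        rw [A.map_smul]
        simp [smul_eq_mul]
      have hkey : (0:ℝ) ≤ lam/4 * (1 - s) * (‖u‖ * ‖u‖) :=
        mul_nonneg (mul_nonneg (by linarith) (by linarith [hs.2]))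
          (mul_nonneg (norm_nonneg u) (norm_nonneg u))
      rw [heq, Real.norm_eq_abs]
      calc |(g (s • u) - A (s • u)) u| ≤ ‖g (s • u) - A (s • u)‖ * ‖u‖ := by
            rw [← Real.norm_eq_abs]; exact (g (s • u) - A (s • u)).le_opNorm u
        _ ≤ (lam/4 * ‖s • u‖) * ‖u‖ :=
            mul_le_mul_of_nonneg_right (hρ₁' _ hsu) (norm_nonneg u)
        _ = lam/4 * (s * ‖u‖) * ‖u‖ := by
            rw [norm_smul, Real.norm_eq_abs, abs_of_nonneg hs.1]
        _ ≤ lam/4 * ‖u‖^2 := by nlinarith [hkey]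
    have key := norm_image_sub_le_of_norm_deriv_le_segment'
      (fun s hs => (hd s hs).hasDerivWithinAt) hbound 1 (right_mem_Icc.mpr zero_le_one)
    simp only [one_smul, zero_smul] at key
    rw [Real.norm_eq_abs] at key
    have h00 : H (0:ℝ×ℝ) = 0 := hH0
    rw [h00] at key
    have e1 : H u - A u u/2 = H u - 1^2/2*(A u u) - (0 - 0^2/2*(A u u)) := by ring
    rw [e1]
    calc |H u - 1^2/2*(A u u) - (0 - 0^2/2*(A u u))| ≤ lam/4*‖u‖^2*(1-0) := key
      _ = lam/4*‖u‖^2 := by ring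
  refine ⟨ρ₁, hρ₁pos, ‖A‖ + lam, by positivity, max M₀ 1,
    lt_of_lt_of_le one_pos (le_max_right _ _),
    fun u hu => ⟨?_, ?_, ?_, ?_⟩, fun u hu => ?_⟩
  · calc ‖g u‖ = ‖(g u - A u) + A u‖ := by rw [sub_add_cancel]
      _ ≤ ‖g u - A u‖ + ‖A u‖ := norm_add_le _ _
      _ ≤ lam/4 * ‖u‖ + ‖A‖ * ‖u‖ := add_le_add (hρ₁' u hu) (A.le_opNorm u)
      _ ≤ (‖A‖ + lam) * ‖u‖ := by nlinarith [norm_nonneg u]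
  · have h1 : |g u u - A u u| ≤ lam/4 * (‖u‖ * ‖u‖) := by
      have heq : g u u - A u u = (g u - A u) u := by simp
      rw [heq]
      calc |(g u - A u) u| ≤ ‖g u - A u‖ * ‖u‖ := by
            rw [← Real.norm_eq_abs]; exact (g u - A u).le_opNorm u
        _ ≤ (lam/4 * ‖u‖) * ‖u‖ :=
            mul_le_mul_of_nonneg_right (hρ₁' u hu) (norm_nonneg u)
        _ = lam/4 * (‖u‖ * ‖u‖) := by ring
    have h2 := hlamA u
    have h3 := abs_le.mp h1
    have hnn : ‖u‖ * ‖u‖ = ‖u‖^2 := (sq ‖u‖).symm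
    rw [hnn] at h3
    linarith [h3.1, h3.2]
  · have h2 := hlamA u
    have h3 := abs_le.mp (hTaylor u hu)
    linarith [h3.1, h3.2]
  · have h2 := hAub u
    have h3 := (abs_le.mp (hTaylor u hu)).2
    linarith [mul_nonneg (norm_nonneg A) (sq_nonneg ‖u‖),
      mul_nonneg hlam.le (sq_nonneg ‖u‖)]
  · exact le_trans (hM₀ u (by simpa [Metric.mem_closedBall, dist_zero_right] using hu))
      (le_max_left _ _)

set_option maxHeartbeats 2000000 in
/-- Estimates on the inverse `ψ = φ⁻¹` of the action–angle transformation: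
there are `r ∈ (0, r₀]` and `C > 0` such that for all `I ∈ (0, r)`,
`sup_θ (‖ψ(I,θ)‖ + ‖∂_θψ(I,θ)‖) ≤ C√I` and `sup_θ ‖∂_Iψ(I,θ)‖ ≤ C/√I`. -/
theorem stmt_17
    -- the Hamiltonian: C², vanishing at the origin, with vanishing gradient and
    -- positive definite Hessian at the origin
    (H : ℝ × ℝ → ℝ) (hHC2 : ContDiff ℝ 2 H) (hH0 : H (0, 0) = 0)
    (hgrad0 : fderiv ℝ H (0, 0) = 0)
    (hHess : ∀ u : ℝ × ℝ, u ≠ 0 → 0 < iteratedFDeriv ℝ 2 H (0, 0) ![u, u])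
    -- `K` with `ω = K' ≥ ω₀ > 0`, `ω` differentiable with derivative `ω'`,
    -- and the growth hypotheses near `0`
    (K Om Om' : ℝ → ℝ) (ω₀ : ℝ) (hω₀ : 0 < ω₀)
    (hK : ∀ I : ℝ, 0 < I → HasDerivAt K (Om I) I)
    (hOmlb : ∀ I : ℝ, 0 < I → ω₀ ≤ Om I)
    (hOm' : ∀ I : ℝ, 0 < I → HasDerivAt Om (Om' I) I)
    (r₀ c₁ c₂ : ℝ) (hr₀ : 0 < r₀) (hc₁ : 0 < c₁) (hc₂ : 0 < c₂)
    (hKgrowth : ∀ I ∈ Set.Ioo (0:ℝ) r₀, c₁ * I ≤ K I ∧ K I ≤ c₂ * I ∧ |Om' I| ≤ c₂ / I)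
    -- the inverse action–angle map `ψ`, its partial derivatives `ψI`, `ψθ`, and its
    -- (equal) mixed second partial derivatives `ψIθ`, all continuous on the domain
    (ψ ψI ψθ ψIθ : ℝ → ℝ → ℝ × ℝ)
    (hper : ∀ I θ : ℝ, ψ I (θ + 1) = ψ I θ)
    (hψθ : ∀ I ∈ Set.Ioo (0:ℝ) r₀, ∀ θ : ℝ, HasDerivAt (fun θ' => ψ I θ') (ψθ I θ) θ)
    (hψI : ∀ I ∈ Set.Ioo (0:ℝ) r₀, ∀ θ : ℝ, HasDerivAt (fun I' => ψ I' θ) (ψI I θ) I)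
    (hψθcont : ContinuousOn (Function.uncurry ψθ) (Set.Ioo (0:ℝ) r₀ ×ˢ Set.univ))
    (hψIcont : ContinuousOn (Function.uncurry ψI) (Set.Ioo (0:ℝ) r₀ ×ˢ Set.univ))
    (hmixed1 : ∀ I ∈ Set.Ioo (0:ℝ) r₀, ∀ θ : ℝ, HasDerivAt (fun θ' => ψI I θ') (ψIθ I θ) θ)
    (hmixed2 : ∀ I ∈ Set.Ioo (0:ℝ) r₀, ∀ θ : ℝ, HasDerivAt (fun I' => ψθ I' θ) (ψIθ I θ) I)
    (hmixedcont : ContinuousOn (Function.uncurry ψIθ) (Set.Ioo (0:ℝ) r₀ ×ˢ Set.univ))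
    -- the defining relations of the action–angle coordinates
    (hlevel : ∀ I ∈ Set.Ioo (0:ℝ) r₀, ∀ θ : ℝ, H (ψ I θ) = K I)
    (hψ10 : ∀ I ∈ Set.Ioo (0:ℝ) r₀, (ψ I 0).1 = 0)
    (hψI10 : ∀ I ∈ Set.Ioo (0:ℝ) r₀, (ψI I 0).1 = 0)
    (hθ1 : ∀ I ∈ Set.Ioo (0:ℝ) r₀, ∀ θ : ℝ,
      (ψθ I θ).1 = -(fderiv ℝ H (ψ I θ)) (0, 1) / Om I)
    (hθ2 : ∀ I ∈ Set.Ioo (0:ℝ) r₀, ∀ θ : ℝ,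
      (ψθ I θ).2 = (fderiv ℝ H (ψ I θ)) (1, 0) / Om I)
    (hψsmall : ∀ δ : ℝ, 0 < δ → ∃ η > 0, ∀ I ∈ Set.Ioo (0:ℝ) (min η r₀), ∀ θ : ℝ,
      ‖ψ I θ‖ ≤ δ) :
    ∃ r : ℝ, 0 < r ∧ r ≤ r₀ ∧ ∃ C > 0, ∀ I ∈ Set.Ioo (0:ℝ) r, ∀ θ : ℝ,
      ‖ψ I θ‖ + ‖ψθ I θ‖ ≤ C * Real.sqrt I ∧ ‖ψI I θ‖ ≤ C / Real.sqrt I := by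
  classical
  have hHdiff : Differentiable ℝ H := hHC2.differentiable (by norm_num)
  have hgC1 : ContDiff ℝ 1 (fderiv ℝ H) := hHC2.fderiv_right (by norm_num)
  have hgdiff : Differentiable ℝ (fderiv ℝ H) := hgC1.differentiable (by norm_num)
  obtain ⟨lam, hlam, hlamA⟩ := aux_posdef (fderiv ℝ (fderiv ℝ H) (0,0)) (by
    intro u hu
    have := hHess u hu
    rwa [iteratedFDeriv_two_apply, Matrix.cons_val_zero, Matrix.cons_val_one,
      Matrix.cons_val_zero] at this)
  obtain ⟨ρ, hρpos, b, hb, M, hM, hball, hMb⟩ :=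
    aux_quadratic H hHC2 hH0 hgrad0 lam hlam hlamA
  obtain ⟨η, hη, hsmall⟩ := hψsmall (ρ/2) (by positivity)
  -- constants
  obtain ⟨cψ, hcψ, hcψ2⟩ : ∃ x > 0, x^2 = c₂/(lam/4) :=
    ⟨Real.sqrt (c₂/(lam/4)), Real.sqrt_pos.mpr (by positivity),
      Real.sq_sqrt (by positivity)⟩
  obtain ⟨cy, hcy, hcy2⟩ : ∃ x > 0, x^2 = c₁/b :=
    ⟨Real.sqrt (c₁/b), Real.sqrt_pos.mpr (by positivity), Real.sq_sqrt (by positivity)⟩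
  obtain ⟨K₁, hK₁, hK₁def⟩ : ∃ x : ℝ, 0 < x ∧ x = M/ω₀ := ⟨M/ω₀, by positivity, rfl⟩
  obtain ⟨E, hE, hEdef⟩ : ∃ x : ℝ, 0 < x ∧ x = b*cψ*c₂/ω₀^2 :=
    ⟨b*cψ*c₂/ω₀^2, div_pos (mul_pos (mul_pos hb hcψ) hc₂) (by positivity), rfl⟩
  obtain ⟨D, hD, hDdef⟩ : ∃ x : ℝ, 0 < x ∧ x = 3*c₂/(lam/2*cy) :=
    ⟨3*c₂/(lam/2*cy), div_pos (by positivity) (mul_pos (by positivity) hcy), rfl⟩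
  obtain ⟨C₂, hC₂, hC₂def⟩ : ∃ x : ℝ, 0 < x ∧ x = (D + E/K₁) * Real.exp K₁ :=
    ⟨_, mul_pos (by positivity) (Real.exp_pos _), rfl⟩
  obtain ⟨C, hCdef⟩ : ∃ x : ℝ, x = cψ + b*cψ/ω₀ + C₂ + 1 := ⟨_, rfl⟩
  have hbcψ : 0 < b*cψ/ω₀ := div_pos (mul_pos hb hcψ) hω₀
  have hC : 0 < C := by rw [hCdef]; linarith
  have hrpos : (0:ℝ) < min η r₀ / 2 := by
    have := lt_min hη hr₀
    linarith
  refine ⟨min η r₀ / 2, hrpos, ?_, C, hC, ?_⟩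
  · have := min_le_right η r₀
    linarith
  intro I hI θ₀
  have hI0 : 0 < I := hI.1
  have hImin : I < min η r₀ := lt_of_lt_of_le hI.2 (by linarith)
  have hIr₀ : I ∈ Set.Ioo (0:ℝ) r₀ :=
    ⟨hI0, lt_of_lt_of_le hImin (min_le_right _ _)⟩
  have hI2 : 2*I < r₀ := by
    have h1 : I < r₀/2 := lt_of_lt_of_le hI.2 (by
      have := min_le_right η r₀; linarith)
    linarith
  have hsm : ∀ θ, ‖ψ I θ‖ ≤ ρ/2 := fun θ => hsmall I ⟨hI0, hImin⟩ θ
  have hballψ : ∀ θ, ‖ψ I θ‖ < ρ := fun θ => lt_of_le_of_lt (hsm θ) (by linarith)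
  set s := Real.sqrt I with hsdef
  have hs : 0 < s := Real.sqrt_pos.mpr hI0
  have hs2 : s^2 = I := Real.sq_sqrt hI0.le
  have hOmpos : 0 < Om I := lt_of_lt_of_le hω₀ (hOmlb I hI0)
  -- bound on Om I
  have hOmub : Om I ≤ 3*c₂ := by
    obtain ⟨ξ, hξ, hslope⟩ := exists_hasDerivAt_eq_slope K Om
      (show I < 2*I by linarith)
      (fun x hx => (hK x (lt_of_lt_of_le hI0 hx.1)).continuousAt.continuousWithinAt)
      (fun x hx => hK x (by linarith [hx.1]))
    have hOmξ : Om ξ ≤ 2*c₂ := by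
      have hK2I := (hKgrowth (2*I) ⟨by linarith, hI2⟩).2.1
      have hKI := (hKgrowth I hIr₀).1
      rw [hslope, show 2*I - I = I by ring, div_le_iff₀ hI0]
      linarith only [hK2I, hKI, mul_nonneg hc₁.le hI0.le]
    obtain ⟨ζ, hζ, hslope2⟩ := exists_hasDerivAt_eq_slope Om Om' hξ.1
      (fun x hx => (hOm' x (by linarith [hx.1, hξ.1])).continuousAt.continuousWithinAt)
      (fun x hx => hOm' x (by linarith [hx.1, hξ.1]))
    have hζr₀ : ζ ∈ Set.Ioo (0:ℝ) r₀ :=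
      ⟨by linarith [hζ.1, hξ.1], by linarith [hζ.2, hξ.2]⟩
    have hOm'ζ : |Om' ζ| ≤ c₂/I := by
      refine le_trans (hKgrowth ζ hζr₀).2.2 ?_
      exact div_le_div_of_nonneg_left hc₂.le hI0 (by linarith [hζ.1, hξ.1])
    have h5 : Om ξ - Om I = Om' ζ * (ξ - I) := by
      rw [hslope2, div_mul_cancel₀ _ (show ξ - I ≠ 0 by
        have := hζ.1; have := hζ.2; intro h; linarith only [hζ.1, hζ.2, h])]
    have h6 : |Om ξ - Om I| ≤ c₂ := by
      rw [h5, abs_mul, abs_of_pos (show (0:ℝ) < ξ - I by linarith [hζ.1, hζ.2, hξ.1])]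
      calc |Om' ζ| * (ξ - I) ≤ (c₂/I) * I := by
            apply mul_le_mul hOm'ζ (by linarith [hξ.2]) (by linarith [hξ.1]) (by positivity)
        _ = c₂ := by field_simp
    have := abs_le.mp h6
    linarith [this.1]
  -- E1 : bound on ψ
  have hψle : ∀ θ, ‖ψ I θ‖ ≤ cψ * s := by
    intro θ
    have hHlow := (hball (ψ I θ) (hballψ θ)).2.2.1
    have hlev := hlevel I hIr₀ θ
    have hKub := (hKgrowth I hIr₀).2.1
    have h1 : ‖ψ I θ‖^2 ≤ (cψ*s)^2 := by
      have hh : lam/4 * ‖ψ I θ‖^2 ≤ c₂ * s^2 := by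
        rw [hs2]
        calc lam/4 * ‖ψ I θ‖^2 ≤ H (ψ I θ) := hHlow
          _ = K I := hlev
          _ ≤ c₂ * I := hKub
      have hcs : (cψ*s)^2 = c₂/(lam/4)*s^2 := by rw [mul_pow, hcψ2]
      rw [hcs, div_mul_eq_mul_div, le_div_iff₀ (show (0:ℝ) < lam/4 by positivity)]
      linarith only [hh]
    calc ‖ψ I θ‖ = Real.sqrt (‖ψ I θ‖^2) := (Real.sqrt_sq (norm_nonneg _)).symm
      _ ≤ Real.sqrt ((cψ*s)^2) := Real.sqrt_le_sqrt h1
      _ = cψ*s := Real.sqrt_sq (mul_nonneg hcψ.le hs.le)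
  -- pointwise bounds on the gradient applied to the basis vectors
  have hgcomp : ∀ θ (e : ℝ×ℝ), ‖e‖ = 1 → |fderiv ℝ H (ψ I θ) e| ≤ b*(cψ*s) := by
    intro θ e he
    have hgub := (hball (ψ I θ) (hballψ θ)).1
    calc |fderiv ℝ H (ψ I θ) e| ≤ ‖fderiv ℝ H (ψ I θ)‖ * ‖e‖ := by
          rw [← Real.norm_eq_abs]; exact (fderiv ℝ H (ψ I θ)).le_opNorm e
      _ = ‖fderiv ℝ H (ψ I θ)‖ := by rw [he, mul_one]
      _ ≤ b * ‖ψ I θ‖ := hgub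
      _ ≤ b*(cψ*s) := mul_le_mul_of_nonneg_left (hψle θ) hb.le
  have he01 : ‖((0:ℝ),(1:ℝ))‖ = 1 := by simp [Prod.norm_def]
  have he10 : ‖((1:ℝ),(0:ℝ))‖ = 1 := by simp [Prod.norm_def]
  -- E2 : bound on ψθ
  have hψθle : ∀ θ, ‖ψθ I θ‖ ≤ (b*cψ/ω₀) * s := by
    intro θ
    have hcomp : ∀ x : ℝ, |x| ≤ b*(cψ*s) → |x / Om I| ≤ (b*cψ/ω₀)*s := by
      intro x hx
      rw [abs_div, abs_of_pos hOmpos]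
      calc |x| / Om I ≤ (b*(cψ*s)) / ω₀ :=
            div_le_div₀ (by positivity) hx hω₀ (hOmlb I hI0)
        _ = (b*cψ/ω₀)*s := by ring
    have h1 : |(ψθ I θ).1| ≤ (b*cψ/ω₀)*s := by
      rw [hθ1 I hIr₀ θ]
      have := hcomp (-(fderiv ℝ H (ψ I θ) ((0:ℝ),(1:ℝ))))
        (by rw [abs_neg]; exact hgcomp θ _ he01)
      simpa using this
    have h2 : |(ψθ I θ).2| ≤ (b*cψ/ω₀)*s := by
      rw [hθ2 I hIr₀ θ]
      exact hcomp _ (hgcomp θ _ he10)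
    rw [Prod.norm_def]
    exact max_le (by rwa [Real.norm_eq_abs]) (by rwa [Real.norm_eq_abs])
  -- E3 : derivative of the level relation in I
  have hω_eq : ∀ θ, fderiv ℝ H (ψ I θ) (ψI I θ) = Om I := by
    intro θ
    have h1 : HasDerivAt (fun I' => H (ψ I' θ)) (fderiv ℝ H (ψ I θ) (ψI I θ)) I :=
      (hHdiff (ψ I θ)).hasFDerivAt.comp_hasDerivAt I (hψI I hIr₀ θ)
    have h2 : (fun I' => H (ψ I' θ)) =ᶠ[𝓝 I] K := by
      filter_upwards [isOpen_Ioo.mem_nhds hIr₀] with x hx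
      exact hlevel x hx θ
    exact (h2.hasDerivAt_iff.mp h1).unique (hK I hI0)
  -- E5 : bound on the mixed derivative
  have hmixbound : ∀ θ, ‖ψIθ I θ‖ ≤ K₁ * ‖ψI I θ‖ + E/s := by
    intro θ
    have hBP : ‖fderiv ℝ (fderiv ℝ H) (ψ I θ)‖ ≤ M :=
      hMb (ψ I θ) (le_trans (hsm θ) (by linarith))
    have hgP : HasDerivAt (fun I' => fderiv ℝ H (ψ I' θ))
        (fderiv ℝ (fderiv ℝ H) (ψ I θ) (ψI I θ)) I :=
      (hgdiff (ψ I θ)).hasFDerivAt.comp_hasDerivAt I (hψI I hIr₀ θ)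
    have happ : ∀ e : ℝ×ℝ, HasDerivAt (fun I' => fderiv ℝ H (ψ I' θ) e)
        ((fderiv ℝ (fderiv ℝ H) (ψ I θ) (ψI I θ)) e) I := by
      intro e
      have := hgP.clm_apply (hasDerivAt_const I e)
      simpa using this
    have hOmne : Om I ≠ 0 := hOmpos.ne'
    have hder : ∀ e : ℝ×ℝ, ‖e‖ = 1 →
        |((fderiv ℝ (fderiv ℝ H) (ψ I θ) (ψI I θ)) e * Om I
          - fderiv ℝ H (ψ I θ) e * Om' I) / (Om I)^2| ≤ K₁ * ‖ψI I θ‖ + E/s := by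
      intro e he
      have h1 : |(fderiv ℝ (fderiv ℝ H) (ψ I θ) (ψI I θ)) e| ≤ M * ‖ψI I θ‖ := by
        calc |(fderiv ℝ (fderiv ℝ H) (ψ I θ) (ψI I θ)) e|
            ≤ ‖(fderiv ℝ (fderiv ℝ H) (ψ I θ)) (ψI I θ)‖ * ‖e‖ := by
              rw [← Real.norm_eq_abs]
              exact ((fderiv ℝ (fderiv ℝ H) (ψ I θ)) (ψI I θ)).le_opNorm e
          _ = ‖(fderiv ℝ (fderiv ℝ H) (ψ I θ)) (ψI I θ)‖ := by rw [he, mul_one]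
          _ ≤ ‖fderiv ℝ (fderiv ℝ H) (ψ I θ)‖ * ‖ψI I θ‖ :=
              (fderiv ℝ (fderiv ℝ H) (ψ I θ)).le_opNorm (ψI I θ)
          _ ≤ M * ‖ψI I θ‖ := mul_le_mul_of_nonneg_right hBP (norm_nonneg _)
      have h2 : |fderiv ℝ H (ψ I θ) e| * |Om' I| ≤ (b*(cψ*s)) * (c₂/I) := by
        apply mul_le_mul (hgcomp θ e he) (hKgrowth I hIr₀).2.2 (abs_nonneg _)
          (by positivity)
      have := aux_quot ((fderiv ℝ (fderiv ℝ H) (ψ I θ) (ψI I θ)) e)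
        (fderiv ℝ H (ψ I θ) e) (Om I) (Om' I) ω₀ (M * ‖ψI I θ‖) ((b*(cψ*s)) * (c₂/I))
        hω₀ (hOmlb I hI0) h1 h2
      refine le_trans this (le_of_eq ?_)
      rw [hK₁def, hEdef, ← hs2]
      field_simp
    -- component 1
    have e1 : (ψIθ I θ).1 = (-((fderiv ℝ (fderiv ℝ H) (ψ I θ) (ψI I θ)) ((0:ℝ),(1:ℝ))) * Om I
        - (-(fderiv ℝ H (ψ I θ) ((0:ℝ),(1:ℝ)))) * Om' I) / (Om I)^2 := by
      have h11 : HasDerivAt (fun I' => -(fderiv ℝ H (ψ I' θ) ((0:ℝ),(1:ℝ))) / Om I')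
          ((-((fderiv ℝ (fderiv ℝ H) (ψ I θ) (ψI I θ)) ((0:ℝ),(1:ℝ))) * Om I
            - (-(fderiv ℝ H (ψ I θ) ((0:ℝ),(1:ℝ)))) * Om' I) / (Om I)^2) I :=
        ((happ _).neg).div (hOm' I hI0) hOmne
      have h12 : HasDerivAt (fun I' => (ψθ I' θ).1) ((ψIθ I θ).1) I := by
        have := (ContinuousLinearMap.fst ℝ ℝ ℝ).hasFDerivAt.comp_hasDerivAt I
          (hmixed2 I hIr₀ θ)
        exact this
      have h13 : (fun I' => (ψθ I' θ).1) =ᶠ[𝓝 I]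
          (fun I' => -(fderiv ℝ H (ψ I' θ) ((0:ℝ),(1:ℝ))) / Om I') := by
        filter_upwards [isOpen_Ioo.mem_nhds hIr₀] with x hx
        exact hθ1 x hx θ
      exact h12.unique (h13.hasDerivAt_iff.mpr h11)
    have e2 : (ψIθ I θ).2 = ((fderiv ℝ (fderiv ℝ H) (ψ I θ) (ψI I θ)) ((1:ℝ),(0:ℝ)) * Om I
        - fderiv ℝ H (ψ I θ) ((1:ℝ),(0:ℝ)) * Om' I) / (Om I)^2 := by
      have h11 : HasDerivAt (fun I' => (fderiv ℝ H (ψ I' θ) ((1:ℝ),(0:ℝ))) / Om I')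
          (((fderiv ℝ (fderiv ℝ H) (ψ I θ) (ψI I θ)) ((1:ℝ),(0:ℝ)) * Om I
            - fderiv ℝ H (ψ I θ) ((1:ℝ),(0:ℝ)) * Om' I) / (Om I)^2) I :=
        (happ _).div (hOm' I hI0) hOmne
      have h12 : HasDerivAt (fun I' => (ψθ I' θ).2) ((ψIθ I θ).2) I := by
        have := (ContinuousLinearMap.snd ℝ ℝ ℝ).hasFDerivAt.comp_hasDerivAt I
          (hmixed2 I hIr₀ θ)
        exact this
      have h13 : (fun I' => (ψθ I' θ).2) =ᶠ[𝓝 I]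
          (fun I' => (fderiv ℝ H (ψ I' θ) ((1:ℝ),(0:ℝ))) / Om I') := by
        filter_upwards [isOpen_Ioo.mem_nhds hIr₀] with x hx
        exact hθ2 x hx θ
      exact h12.unique (h13.hasDerivAt_iff.mpr h11)
    have hb1 : |(ψIθ I θ).1| ≤ K₁ * ‖ψI I θ‖ + E/s := by
      rw [e1]
      have := hder ((0:ℝ),(1:ℝ)) he01
      calc |(-((fderiv ℝ (fderiv ℝ H) (ψ I θ) (ψI I θ)) ((0:ℝ),(1:ℝ))) * Om I
          - (-(fderiv ℝ H (ψ I θ) ((0:ℝ),(1:ℝ)))) * Om' I) / (Om I)^2|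
          = |((fderiv ℝ (fderiv ℝ H) (ψ I θ) (ψI I θ)) ((0:ℝ),(1:ℝ)) * Om I
          - fderiv ℝ H (ψ I θ) ((0:ℝ),(1:ℝ)) * Om' I) / (Om I)^2| := by
            rw [← abs_neg]
            congr 1
            ring
        _ ≤ K₁ * ‖ψI I θ‖ + E/s := this
    have hb2 : |(ψIθ I θ).2| ≤ K₁ * ‖ψI I θ‖ + E/s := by
      rw [e2]
      exact hder ((1:ℝ),(0:ℝ)) he10
    rw [Prod.norm_def]
    exact max_le (by rwa [Real.norm_eq_abs]) (by rwa [Real.norm_eq_abs])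
  -- E6 : bound at θ = 0
  have hψI0bound : ‖ψI I 0‖ ≤ D/s := by
    have hP0 : ψ I 0 = ((0:ℝ), (ψ I 0).2) := Prod.ext (hψ10 I hIr₀) rfl
    set y := (ψ I 0).2 with hydef
    have hnP0 : ‖ψ I 0‖ = |y| := by
      rw [hP0, Prod.norm_def]
      simp [Real.norm_eq_abs]
    -- lower bound on |y|
    have hylb : cy * s ≤ |y| := by
      have hHub := (hball (ψ I 0) (hballψ 0)).2.2.2
      have hKlb := (hKgrowth I hIr₀).1
      have hlev := hlevel I hIr₀ 0
      have h1 : c₁ * s^2 ≤ b * y^2 := by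
        rw [hs2]
        calc c₁ * I ≤ K I := hKlb
          _ = H (ψ I 0) := hlev.symm
          _ ≤ b * ‖ψ I 0‖^2 := hHub
          _ = b * y^2 := by rw [hnP0, sq_abs]
      have h2 : (cy*s)^2 ≤ y^2 := by
        rw [mul_pow, hcy2, div_mul_eq_mul_div, div_le_iff₀ hb]
        linarith only [h1]
      calc cy*s = Real.sqrt ((cy*s)^2) := (Real.sqrt_sq (mul_nonneg hcy.le hs.le)).symm
        _ ≤ Real.sqrt (y^2) := Real.sqrt_le_sqrt h2
        _ = |y| := Real.sqrt_sq_eq_abs y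
    have hy0 : 0 < |y| := lt_of_lt_of_le (mul_pos hcy hs) hylb
    -- lower bound on the gradient component
    have hsmul : ((0:ℝ), y) = y • ((0:ℝ),(1:ℝ)) := by
      simp [Prod.smul_mk, smul_eq_mul]
    have hgPP : fderiv ℝ H (ψ I 0) (ψ I 0) = y * fderiv ℝ H (ψ I 0) ((0:ℝ),(1:ℝ)) := by
      nth_rewrite 2 [hP0]
      rw [hsmul, (fderiv ℝ H (ψ I 0)).map_smul, smul_eq_mul]
    have hglow := (hball (ψ I 0) (hballψ 0)).2.1
    have hgc : lam/2 * |y| ≤ |fderiv ℝ H (ψ I 0) ((0:ℝ),(1:ℝ))| := by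
      have h1 : lam/2 * |y|^2 ≤ |y| * |fderiv ℝ H (ψ I 0) ((0:ℝ),(1:ℝ))| := by
        calc lam/2 * |y|^2 = lam/2 * ‖ψ I 0‖^2 := by rw [hnP0]
          _ ≤ fderiv ℝ H (ψ I 0) (ψ I 0) := hglow
          _ = y * fderiv ℝ H (ψ I 0) ((0:ℝ),(1:ℝ)) := hgPP
          _ ≤ |y * fderiv ℝ H (ψ I 0) ((0:ℝ),(1:ℝ))| := le_abs_self _
          _ = |y| * |fderiv ℝ H (ψ I 0) ((0:ℝ),(1:ℝ))| := abs_mul _ _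
      apply le_of_mul_le_mul_left _ hy0
      calc |y| * (lam/2*|y|) = lam/2*|y|^2 := by ring
        _ ≤ |y| * |fderiv ℝ H (ψ I 0) ((0:ℝ),(1:ℝ))| := h1
    -- ψI I 0 = (0, t)
    have hQ0 : ψI I 0 = ((0:ℝ), (ψI I 0).2) := Prod.ext (hψI10 I hIr₀) rfl
    set t := (ψI I 0).2 with htdef
    have hnQ0 : ‖ψI I 0‖ = |t| := by
      rw [hQ0, Prod.norm_def]
      simp [Real.norm_eq_abs]
    have hteq : t * fderiv ℝ H (ψ I 0) ((0:ℝ),(1:ℝ)) = Om I := by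
      have := hω_eq 0
      rw [hQ0] at this
      rw [← this]
      have hsmul' : ((0:ℝ), t) = t • ((0:ℝ),(1:ℝ)) := by
        simp [Prod.smul_mk, smul_eq_mul]
      rw [hsmul', (fderiv ℝ H (ψ I 0)).map_smul, smul_eq_mul]
    have htabs : |t| * |fderiv ℝ H (ψ I 0) ((0:ℝ),(1:ℝ))| = Om I := by
      rw [← abs_mul, hteq, abs_of_pos hOmpos]
    have hclb : lam/2*(cy*s) ≤ |fderiv ℝ H (ψ I 0) ((0:ℝ),(1:ℝ))| :=
      le_trans (mul_le_mul_of_nonneg_left hylb (by linarith only [hlam])) hgc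
    have hcpos : 0 < lam/2*(cy*s) := by positivity
    have ht1 : |t| ≤ Om I / (lam/2*(cy*s)) := by
      rw [le_div_iff₀ hcpos, ← htabs]
      exact mul_le_mul_of_nonneg_left hclb (abs_nonneg t)
    rw [hnQ0]
    calc |t| ≤ Om I / (lam/2*(cy*s)) := ht1
      _ ≤ (3*c₂) / (lam/2*(cy*s)) := (div_le_div_iff_of_pos_right hcpos).mpr hOmub
      _ = D/s := by rw [hDdef]; field_simp
  -- E7 : Gronwall
  have hgron : ∀ θ ∈ Set.Icc (0:ℝ) 1,
      ‖ψI I θ‖ ≤ gronwallBound (D/s) K₁ (E/s) (θ - 0) :=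
    norm_le_gronwallBound_of_norm_deriv_right_le
      (fun θ _ => (hmixed1 I hIr₀ θ).continuousAt.continuousWithinAt)
      (fun θ _ => (hmixed1 I hIr₀ θ).hasDerivWithinAt)
      hψI0bound
      (fun θ _ => hmixbound θ)
  have hgb : ∀ θ ∈ Set.Icc (0:ℝ) 1, gronwallBound (D/s) K₁ (E/s) (θ - 0) ≤ C₂/s := by
    intro θ hθ
    rw [gronwallBound_of_K_ne_0 hK₁.ne']
    have hexp : Real.exp (K₁*(θ-0)) ≤ Real.exp K₁ := by
      apply Real.exp_le_exp.mpr
      calc K₁*(θ-0) ≤ K₁*1 := mul_le_mul_of_nonneg_left (by linarith only [hθ.2]) hK₁.le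
        _ = K₁ := mul_one _
    have hexppos : 0 < Real.exp (K₁*(θ-0)) := Real.exp_pos _
    have hDs : 0 ≤ D/s := div_nonneg hD.le hs.le
    have hEs : 0 ≤ E/s/K₁ := div_nonneg (div_nonneg hE.le hs.le) hK₁.le
    have h1 : D/s * Real.exp (K₁*(θ-0)) ≤ D/s * Real.exp K₁ :=
      mul_le_mul_of_nonneg_left hexp hDs
    have h2 : E/s/K₁ * (Real.exp (K₁*(θ-0)) - 1) ≤ E/s/K₁ * Real.exp K₁ :=
      mul_le_mul_of_nonneg_left (by linarith) hEs
    have heq : D/s*Real.exp K₁ + E/s/K₁*Real.exp K₁ = C₂/s := by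
      rw [hC₂def]
      field_simp
    linarith
  -- periodicity of ψI in θ
  have hperI : Function.Periodic (fun θ => ψI I θ) 1 := by
    intro θ
    have h1 := hψI I hIr₀ (θ+1)
    have h2 := hψI I hIr₀ θ
    have he : (fun I' => ψ I' (θ+1)) = fun I' => ψ I' θ := funext fun I' => hper I' θ
    rw [he] at h1
    exact h1.unique h2
  have hψIbound : ∀ θ, ‖ψI I θ‖ ≤ C₂/s := by
    intro θ
    have hfr : ψI I θ = ψI I (Int.fract θ) := by
      have h := hperI.sub_int_mul_eq (x := θ) ⌊θ⌋
      rw [mul_one] at h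
      rw [show Int.fract θ = θ - ⌊θ⌋ from rfl]
      exact h.symm
    have hmem : Int.fract θ ∈ Set.Icc (0:ℝ) 1 :=
      ⟨Int.fract_nonneg θ, (Int.fract_lt_one θ).le⟩
    rw [hfr]
    exact le_trans (hgron _ hmem) (hgb _ hmem)
  -- conclusion
  constructor
  · calc ‖ψ I θ₀‖ + ‖ψθ I θ₀‖ ≤ cψ*s + (b*cψ/ω₀)*s :=
        add_le_add (hψle θ₀) (hψθle θ₀)
      _ = (cψ + b*cψ/ω₀)*s := by ring
      _ ≤ C*s := mul_le_mul_of_nonneg_right (by rw [hCdef]; linarith only [hC₂]) hs.le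
  · calc ‖ψI I θ₀‖ ≤ C₂/s := hψIbound θ₀
      _ ≤ C/s := (div_le_div_iff_of_pos_right hs).mpr (by linarith)
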